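/- (Harris-type geometric ergodicity used in Theorem 1.) Let S be a countable type and P : S → S → ℝ a stochastic matrix (P x y ≥ 0 for all x, y and Σ_y P x y = 1 for all x), acting on signed distributions by (μP)(y) = Σ_x μ(x)·P x y and on functions by (Pf)(x) = Σ_y P x y · f(y). Let U : S → ℝ satisfy U ≥ 1, and suppose: (drift) there exist γ ∈ (0,1) and K < ∞ with (PU)(x) ≤ γ·U(x) + K for all x ∈ S; (minorization) there exist R > 2K/(1−γ), α > 0, and a probability distribution ν on S such that P x y ≥ α·ν(y) for all y ∈ S and all x in the set C = { x ∈ S : U(x) ≤ R }. Define the U-weighted total variation norm ‖μ‖_U = Σ_x U(x)·|μ(x)| for signed distributions μ with this sum finite. Then P admits a unique invariant probability distribution π (i.e. πP = π) with ‖π‖_U < ∞, and there exist a constant c₁ > 0 and ρ ∈ (0,1) such that for all probability distributions μ₁, μ₂ with ‖μ₁‖_U, ‖μ₂‖_U < ∞ and all n ∈ ℕ, ‖μ₁Pⁿ − μ₂Pⁿ‖_U ≤ c₁·ρⁿ·‖μ₁ − μ₂‖_U. -/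

import Mathlib

open scoped ENNReal

/-- Left action of a transition matrix on (signed) distributions:
`(μP)(y) = Σ_x μ(x)·P x y`. -/
noncomputable def stepL {S : Type*} (P : S → S → ℝ) (μ : S → ℝ) : S → ℝ :=
  fun y => ∑' x, μ x * P x y

/-- `U`-weighted total variation norm `‖μ‖_U = Σ_x U(x)·|μ(x)|`, valued in `ℝ≥0∞`. -/
noncomputable def normU {S : Type*} (U : S → ℝ) (μ : S → ℝ) : ℝ≥0∞ :=
  ∑' x, ENNReal.ofReal (U x * |μ x|)

namespace HarrisAux

open scoped NNReal

variable {S : Type*}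

lemma tsum_ofReal_eq {f : S → ℝ} (h0 : ∀ x, 0 ≤ f x) (hs : Summable f) :
    (∑' x, ENNReal.ofReal (f x)) = ENNReal.ofReal (∑' x, f x) :=
  (ENNReal.ofReal_tsum_of_nonneg h0 hs).symm

lemma summable_of_tsum_ofReal_ne_top {f : S → ℝ} (h0 : ∀ x, 0 ≤ f x)
    (h : (∑' x, ENNReal.ofReal (f x)) ≠ ⊤) : Summable f := by
  have h' : (∑' x, (((f x).toNNReal : ℝ≥0) : ℝ≥0∞)) ≠ ⊤ := h
  have hsum := ENNReal.tsum_coe_ne_top_iff_summable.1 h'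
  have hsum' := NNReal.summable_coe.2 hsum
  refine hsum'.congr (fun x => ?_)
  exact Real.coe_toNNReal _ (h0 x)

lemma ofReal_tsum_le {f : S → ℝ} (h0 : ∀ x, 0 ≤ f x) :
    ENNReal.ofReal (∑' x, f x) ≤ ∑' x, ENNReal.ofReal (f x) := by
  by_cases hs : Summable f
  · exact le_of_eq (tsum_ofReal_eq h0 hs).symm
  · rw [tsum_eq_zero_of_not_summable hs]; simp

lemma P_le_one {P : S → S → ℝ} (hP0 : ∀ x y, 0 ≤ P x y) (hP1 : ∀ x, HasSum (P x) 1)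
    (x y : S) : P x y ≤ 1 :=
  le_hasSum (hP1 x) y (fun z _ => hP0 x z)

lemma summable_weight {U : S → ℝ} {μ : S → ℝ} (hU : ∀ x, 0 ≤ U x) (h : normU U μ < ⊤) :
    Summable (fun x => U x * |μ x|) :=
  summable_of_tsum_ofReal_ne_top (fun x => mul_nonneg (hU x) (abs_nonneg _)) h.ne

lemma summable_of_normU {U : S → ℝ} {μ : S → ℝ} (hU : ∀ x, 1 ≤ U x)
    (h : normU U μ < ⊤) : Summable μ := by
  have h1 : Summable (fun x => |μ x|) := by
    refine Summable.of_nonneg_of_le (fun x => abs_nonneg _) (fun x => ?_)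
      (summable_weight (fun x => le_trans zero_le_one (hU x)) h)
    nlinarith [abs_nonneg (μ x), hU x]
  exact summable_abs_iff.1 h1

lemma summable_mul_P {P : S → S → ℝ} (hP0 : ∀ x y, 0 ≤ P x y) (hP1 : ∀ x, HasSum (P x) 1)
    {μ : S → ℝ} (hμ : Summable μ) (y : S) : Summable (fun x => μ x * P x y) := by
  have h1 : Summable (fun x => |μ x * P x y|) := by
    refine Summable.of_nonneg_of_le (fun x => abs_nonneg _) (fun x => ?_) hμ.abs
    rw [abs_mul, abs_of_nonneg (hP0 x y)]
    nlinarith [abs_nonneg (μ x), hP0 x y, P_le_one hP0 hP1 x y]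
  exact summable_abs_iff.1 h1

lemma stepL_nonneg {P : S → S → ℝ} (hP0 : ∀ x y, 0 ≤ P x y) {μ : S → ℝ}
    (hμ0 : ∀ x, 0 ≤ μ x) (y : S) : 0 ≤ stepL P μ y :=
  tsum_nonneg (fun x => mul_nonneg (hμ0 x) (hP0 x y))

lemma stepL_sub {P : S → S → ℝ} (hP0 : ∀ x y, 0 ≤ P x y) (hP1 : ∀ x, HasSum (P x) 1)
    {μ₁ μ₂ : S → ℝ} (h₁ : Summable μ₁) (h₂ : Summable μ₂) :
    stepL P (μ₁ - μ₂) = stepL P μ₁ - stepL P μ₂ := by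
  funext y
  simp only [stepL, Pi.sub_apply]
  rw [tsum_congr (fun x => show (μ₁ x - μ₂ x) * P x y = μ₁ x * P x y - μ₂ x * P x y by ring)]
  exact Summable.tsum_sub (summable_mul_P hP0 hP1 h₁ y) (summable_mul_P hP0 hP1 h₂ y)

lemma tsum_ofReal_stepL {P : S → S → ℝ} (hP0 : ∀ x y, 0 ≤ P x y) (hP1 : ∀ x, HasSum (P x) 1)
    {μ : S → ℝ} (hμ0 : ∀ x, 0 ≤ μ x) (hμs : Summable μ)
    (W : S → ℝ) (hW : ∀ y, 0 ≤ W y) :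
    ∑' y, ENNReal.ofReal (W y * stepL P μ y)
      = ∑' x, ENNReal.ofReal (μ x) * ∑' y, ENNReal.ofReal (P x y * W y) := by
  have key : ∀ y, ENNReal.ofReal (W y * stepL P μ y)
      = ∑' x, ENNReal.ofReal (μ x * P x y * W y) := by
    intro y
    have hsum : Summable (fun x => μ x * P x y * W y) :=
      (summable_mul_P hP0 hP1 hμs y).mul_right _
    have h0 : ∀ x, 0 ≤ μ x * P x y * W y :=
      fun x => mul_nonneg (mul_nonneg (hμ0 x) (hP0 x y)) (hW y)
    rw [tsum_ofReal_eq h0 hsum, tsum_mul_right]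
    congr 1
    rw [stepL]; ring
  rw [tsum_congr key, ENNReal.tsum_comm]
  refine tsum_congr (fun x => ?_)
  have : ∀ y, ENNReal.ofReal (μ x * P x y * W y)
      = ENNReal.ofReal (μ x) * ENNReal.ofReal (P x y * W y) := by
    intro y
    rw [mul_assoc, ENNReal.ofReal_mul (hμ0 x)]
  rw [tsum_congr this, ENNReal.tsum_mul_left]

lemma hasSum_stepL {P : S → S → ℝ} (hP0 : ∀ x y, 0 ≤ P x y) (hP1 : ∀ x, HasSum (P x) 1)
    {μ : S → ℝ} (hμ0 : ∀ x, 0 ≤ μ x) (hμ1 : HasSum μ 1) : HasSum (stepL P μ) 1 := by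
  have key : ∑' y, ENNReal.ofReal (stepL P μ y) = 1 := by
    have h0 := tsum_ofReal_stepL hP0 hP1 hμ0 hμ1.summable (fun _ => (1:ℝ))
      (fun _ => zero_le_one)
    simp only [one_mul, mul_one] at h0
    rw [h0]
    have h2 : ∀ x, (∑' y, ENNReal.ofReal (P x y)) = 1 := by
      intro x
      rw [tsum_ofReal_eq (hP0 x) (hP1 x).summable, (hP1 x).tsum_eq, ENNReal.ofReal_one]
    rw [tsum_congr (fun x => by rw [h2 x, mul_one]), tsum_ofReal_eq hμ0 hμ1.summable,
      hμ1.tsum_eq, ENNReal.ofReal_one]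
  have hs : Summable (stepL P μ) :=
    summable_of_tsum_ofReal_ne_top (stepL_nonneg hP0 hμ0) (by rw [key]; exact ENNReal.one_ne_top)
  have ht : ∑' y, stepL P μ y = 1 := by
    have := tsum_ofReal_eq (stepL_nonneg hP0 hμ0) hs
    rw [this] at key
    have h0 : 0 ≤ ∑' y, stepL P μ y := tsum_nonneg (stepL_nonneg hP0 hμ0)
    rw [← ENNReal.ofReal_one] at key
    exact (ENNReal.ofReal_eq_ofReal_iff h0 zero_le_one).1 key
  rw [← ht]; exact hs.hasSum

lemma normU_stepL_le {P : S → S → ℝ} (hP0 : ∀ x y, 0 ≤ P x y) (hP1 : ∀ x, HasSum (P x) 1)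
    {U : S → ℝ} (hU : ∀ x, 1 ≤ U x) {γ K : ℝ} (hγ0 : 0 ≤ γ) (hK0 : 0 ≤ K)
    (hPUsum : ∀ x, Summable fun y => P x y * U y)
    (hdrift : ∀ x, (∑' y, P x y * U y) ≤ γ * U x + K)
    {μ : S → ℝ} (hμ0 : ∀ x, 0 ≤ μ x) (hμ1 : HasSum μ 1) :
    normU U (stepL P μ) ≤ ENNReal.ofReal γ * normU U μ + ENNReal.ofReal K := by
  have hU0 : ∀ x, 0 ≤ U x := fun x => le_trans zero_le_one (hU x)
  have e1 : normU U (stepL P μ)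
      = ∑' x, ENNReal.ofReal (μ x) * ∑' y, ENNReal.ofReal (P x y * U y) := by
    rw [normU, tsum_congr (fun y => by
      rw [abs_of_nonneg (stepL_nonneg hP0 hμ0 y)])]
    exact tsum_ofReal_stepL hP0 hP1 hμ0 hμ1.summable U hU0
  rw [e1]
  have e2 : ∀ x, ENNReal.ofReal (μ x) * ∑' y, ENNReal.ofReal (P x y * U y)
      ≤ ENNReal.ofReal (γ * (U x * μ x)) + ENNReal.ofReal (K * μ x) := by
    intro x
    have h1 : (∑' y, ENNReal.ofReal (P x y * U y)) = ENNReal.ofReal (∑' y, P x y * U y) :=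
      tsum_ofReal_eq (fun y => mul_nonneg (hP0 x y) (hU0 y)) (hPUsum x)
    rw [h1]
    refine le_trans (mul_le_mul_right (ENNReal.ofReal_le_ofReal (hdrift x)) _) ?_
    rw [← ENNReal.ofReal_mul (hμ0 x)]
    rw [← ENNReal.ofReal_add (mul_nonneg hγ0 (mul_nonneg (hU0 x) (hμ0 x)))
      (mul_nonneg hK0 (hμ0 x))]
    exact ENNReal.ofReal_le_ofReal (le_of_eq (by ring))
  refine le_trans (ENNReal.tsum_le_tsum e2) ?_
  rw [ENNReal.tsum_add]
  have e3 : (∑' x, ENNReal.ofReal (γ * (U x * μ x)))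
      = ENNReal.ofReal γ * normU U μ := by
    rw [normU, ← ENNReal.tsum_mul_left]
    refine tsum_congr (fun x => ?_)
    rw [← ENNReal.ofReal_mul hγ0, abs_of_nonneg (hμ0 x)]
  have e4 : (∑' x, ENNReal.ofReal (K * μ x)) = ENNReal.ofReal K := by
    rw [tsum_congr (fun x => ENNReal.ofReal_mul hK0), ENNReal.tsum_mul_left,
      tsum_ofReal_eq hμ0 hμ1.summable, hμ1.tsum_eq, ENNReal.ofReal_one, mul_one]
  rw [e3, e4]

lemma two_point {P : S → S → ℝ} (hP0 : ∀ x y, 0 ≤ P x y) (hP1 : ∀ x, HasSum (P x) 1)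
    {U : S → ℝ} (hU : ∀ x, 1 ≤ U x)
    {γ K : ℝ} (hγ0 : 0 ≤ γ)
    (hPUsum : ∀ x, Summable fun y => P x y * U y)
    (hdrift : ∀ x, (∑' y, P x y * U y) ≤ γ * U x + K)
    {R α : ℝ} (hα : 0 < α)
    {ν : S → ℝ} (hν0 : ∀ y, 0 ≤ ν y) (hν1 : HasSum ν 1)
    (hminor : ∀ x, U x ≤ R → ∀ y, α * ν y ≤ P x y)
    {β : ℝ} (hβ : 0 < β) (a : ℝ) (ha0 : 0 ≤ a)
    (hcase1 : ∀ s : ℝ, 2 ≤ s → s ≤ 2*R → 2 - 2*α + β*(γ*s + 2*K) ≤ a * (2 + β*s))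
    (hcase2 : ∀ s : ℝ, R ≤ s → 2 ≤ s → 2 + β*(γ*s + 2*K) ≤ a * (2 + β*s)) :
    ∀ x z, (∑' y, (1 + β*U y) * |P x y - P z y|)
      ≤ a * ((1 + β*U x) + (1 + β*U z)) := by
  intro x z
  set V : S → ℝ := fun y => 1 + β*U y with hV
  have hV1 : ∀ y, 1 ≤ V y := fun y => by
    have := hU y; simp only [hV]; nlinarith
  have hV0 : ∀ y, 0 ≤ V y := fun y => le_trans zero_le_one (hV1 y)
  have hsV : ∀ w, Summable (fun y => V y * P w y) := by
    intro w
    have : Summable (fun y => P w y + β * (P w y * U y)) :=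
      (hP1 w).summable.add ((hPUsum w).mul_left β)
    exact this.congr (fun y => by simp only [hV]; ring)
  have htV : ∀ w, (∑' y, V y * P w y) = 1 + β * (∑' y, P w y * U y) := by
    intro w
    have : ∀ y, V y * P w y = P w y + β * (P w y * U y) := fun y => by
      simp only [hV]; ring
    rw [tsum_congr this, Summable.tsum_add (hP1 w).summable ((hPUsum w).mul_left β),
      (hP1 w).tsum_eq, tsum_mul_left]
  have htVle : ∀ w, (∑' y, V y * P w y) ≤ 1 + β * (γ * U w + K) := by
    intro w
    rw [htV w]
    have := hdrift w
    nlinarith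
  have habs : ∀ y, |P x y - P z y| ≤ P x y + P z y := by
    intro y
    refine abs_sub _ _ |>.trans ?_
    rw [abs_of_nonneg (hP0 x y), abs_of_nonneg (hP0 z y)]
  have hsumVP : Summable (fun y => V y * (P x y + P z y)) := by
    have : Summable (fun y => V y * P x y + V y * P z y) := (hsV x).add (hsV z)
    exact this.congr (fun y => by ring)
  have htsumVP : (∑' y, V y * (P x y + P z y))
      = (∑' y, V y * P x y) + (∑' y, V y * P z y) := by
    rw [← Summable.tsum_add (hsV x) (hsV z)]
    exact tsum_congr (fun y => by ring)
  have hsT : Summable (fun y => V y * |P x y - P z y|) := by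
    refine Summable.of_nonneg_of_le (fun y => mul_nonneg (hV0 y) (abs_nonneg _))
      (fun y => ?_) hsumVP
    exact mul_le_mul_of_nonneg_left (habs y) (hV0 y)
  have hVs : V x + V z = 2 + β * (U x + U z) := by simp only [hV]; ring
  by_cases hC : U x ≤ R ∧ U z ≤ R
  · -- both in the small set
    obtain ⟨hCx, hCz⟩ := hC
    have hmin : ∀ y, α * ν y ≤ P x y ∧ α * ν y ≤ P z y :=
      fun y => ⟨hminor x hCx y, hminor z hCz y⟩
    have habs2 : ∀ y, |P x y - P z y| ≤ P x y + P z y - 2*(α * ν y) := by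
      intro y
      obtain ⟨h1, h2⟩ := hmin y
      rw [abs_le]; constructor <;> nlinarith
    have hsν : Summable (fun y => V y * (2*(α * ν y))) := by
      refine Summable.of_nonneg_of_le
        (fun y => mul_nonneg (hV0 y) (by nlinarith [hν0 y])) (fun y => ?_) hsumVP
      have := (hmin y).1; have := (hmin y).2
      have := hV0 y
      nlinarith
    have hg : Summable (fun y => V y * (P x y + P z y - 2*(α * ν y))) := by
      have : Summable (fun y => V y * (P x y + P z y) - V y * (2*(α*ν y))) :=
        hsumVP.sub hsν
      exact this.congr (fun y => by ring)
    have step1 : (∑' y, V y * |P x y - P z y|)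
        ≤ ∑' y, V y * (P x y + P z y - 2*(α * ν y)) := by
      refine Summable.tsum_le_tsum (fun y => ?_) hsT hg
      exact mul_le_mul_of_nonneg_left (habs2 y) (hV0 y)
    have step2 : (∑' y, V y * (P x y + P z y - 2*(α * ν y)))
        = (∑' y, V y * (P x y + P z y)) - (∑' y, V y * (2*(α * ν y))) := by
      rw [← Summable.tsum_sub hsumVP hsν]
      exact tsum_congr (fun y => by ring)
    have hsνV : Summable (fun y => V y * ν y) := by
      have h2α : (0:ℝ) < 2*α := by linarith
      refine Summable.of_nonneg_of_le (fun y => mul_nonneg (hV0 y) (hν0 y))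
        (fun y => ?_) (hsumVP.mul_left (1/(2*α)))
      rw [div_mul_eq_mul_div, le_div_iff₀ h2α]
      have := (hmin y).1; have := (hmin y).2; have := hV0 y
      nlinarith
    have hN : (1:ℝ) ≤ ∑' y, V y * ν y := by
      calc (1:ℝ) = ∑' y, ν y := hν1.tsum_eq.symm
        _ ≤ ∑' y, V y * ν y := by
          refine Summable.tsum_le_tsum (fun y => ?_) hν1.summable hsνV
          have := hν0 y; have := hV1 y
          nlinarith
    have step3 : (∑' y, V y * (2*(α * ν y))) = 2*α*(∑' y, V y * ν y) := by
      rw [← tsum_mul_left]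
      exact tsum_congr (fun y => by ring)
    have hs2 : 2 ≤ U x + U z := by have := hU x; have := hU z; linarith
    have hs2R : U x + U z ≤ 2*R := by linarith
    have final := hcase1 (U x + U z) hs2 hs2R
    have hb1 := htVle x
    have hb2 := htVle z
    calc (∑' y, V y * |P x y - P z y|)
        ≤ (∑' y, V y * (P x y + P z y)) - (∑' y, V y * (2*(α * ν y))) := by
          rw [← step2]; exact step1
      _ ≤ (1 + β*(γ*U x + K)) + (1 + β*(γ*U z + K)) - 2*α*1 := by
          rw [htsumVP, step3]
          have : 2*α*1 ≤ 2*α*(∑' y, V y * ν y) := by nlinarith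
          linarith
      _ ≤ a * (2 + β*(U x + U z)) := by nlinarith
      _ = a * (V x + V z) := by rw [hVs]
  · -- at least one outside the small set
    have hsR : R ≤ U x + U z := by
      rcases not_and_or.1 hC with h | h
      · push_neg at h; have := hU z; linarith
      · push_neg at h; have := hU x; linarith
    have hs2 : 2 ≤ U x + U z := by have := hU x; have := hU z; linarith
    have final := hcase2 (U x + U z) hsR hs2
    have hb1 := htVle x
    have hb2 := htVle z
    calc (∑' y, V y * |P x y - P z y|)
        ≤ ∑' y, V y * (P x y + P z y) := by
          refine Summable.tsum_le_tsum (fun y => ?_) hsT hsumVP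
          exact mul_le_mul_of_nonneg_left (habs y) (hV0 y)
      _ = (∑' y, V y * P x y) + (∑' y, V y * P z y) := htsumVP
      _ ≤ a * (2 + β*(U x + U z)) := by nlinarith
      _ = a * (V x + V z) := by rw [hVs]

lemma contraction_step {P : S → S → ℝ} (hP0 : ∀ x y, 0 ≤ P x y) (hP1 : ∀ x, HasSum (P x) 1)
    {V : S → ℝ} (hV1 : ∀ y, 1 ≤ V y)
    (hsVP : ∀ w, Summable (fun y => V y * P w y))
    {a : ℝ} (ha0 : 0 ≤ a)
    (htwo : ∀ x z, (∑' y, V y * |P x y - P z y|) ≤ a * (V x + V z))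
    {μ₁ μ₂ : S → ℝ} (h₁0 : ∀ x, 0 ≤ μ₁ x) (h₁1 : HasSum μ₁ 1)
    (h₂0 : ∀ x, 0 ≤ μ₂ x) (h₂1 : HasSum μ₂ 1) :
    normU V (stepL P μ₁ - stepL P μ₂) ≤ ENNReal.ofReal a * normU V (μ₁ - μ₂) := by
  classical
  have hV0 : ∀ y, 0 ≤ V y := fun y => le_trans zero_le_one (hV1 y)
  have hμ₁s : Summable μ₁ := h₁1.summable
  have hμ₂s : Summable μ₂ := h₂1.summable
  set η : S → ℝ := fun x => μ₁ x - μ₂ x with hη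
  set p : S → ℝ := fun x => max (η x) 0 with hp
  set q : S → ℝ := fun x => max (-η x) 0 with hq
  have hp0 : ∀ x, 0 ≤ p x := fun x => le_max_right _ _
  have hq0 : ∀ x, 0 ≤ q x := fun x => le_max_right _ _
  have hpq_sub : ∀ x, p x - q x = η x := fun x => max_zero_sub_max_neg_zero_eq_self _
  have hpq_add : ∀ x, p x + q x = |η x| := fun x => max_zero_add_max_neg_zero_eq_abs_self _
  have hpμ : ∀ x, p x ≤ μ₁ x := fun x => max_le (by have := h₂0 x; simp only [hη]; linarith) (h₁0 x)
  have hqμ : ∀ x, q x ≤ μ₂ x := fun x => max_le (by have := h₁0 x; simp only [hη]; linarith) (h₂0 x)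
  have hps : Summable p := Summable.of_nonneg_of_le hp0 hpμ hμ₁s
  have hqs : Summable q := Summable.of_nonneg_of_le hq0 hqμ hμ₂s
  have hηs : Summable η := hμ₁s.sub hμ₂s
  have hηt : (∑' x, η x) = 0 := by
    simp only [hη]
    rw [Summable.tsum_sub hμ₁s hμ₂s, h₁1.tsum_eq, h₂1.tsum_eq, sub_self]
  set m : ℝ := ∑' x, p x with hmdef
  have hm0 : 0 ≤ m := tsum_nonneg hp0
  have hqm : (∑' x, q x) = m := by
    have : ∀ x, q x = p x - η x := fun x => by have := hpq_sub x; linarith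
    rw [tsum_congr this, Summable.tsum_sub hps hηs, hηt, sub_zero]
  rcases eq_or_lt_of_le hm0 with hmz | hm
  · -- m = 0 : the two measures coincide
    have hp_zero : ∀ x, p x = 0 := by
      intro x
      have h1 : p x ≤ m := Summable.le_tsum hps x (fun z _ => hp0 z)
      have := hp0 x; linarith [hmz.symm ▸ h1]
    have hq_zero : ∀ x, q x = 0 := by
      intro x
      have h1 : q x ≤ m := hqm ▸ Summable.le_tsum hqs x (fun z _ => hq0 z)
      have := hq0 x; linarith [hmz.symm ▸ h1]
    have hμeq : μ₁ = μ₂ := by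
      funext x
      have := hpq_sub x
      rw [hp_zero x, hq_zero x] at this
      simp only [hη] at this; linarith
    rw [hμeq]
    simp [normU, sub_self]
  · -- m > 0
    have hm' : (0:ℝ) < m := hm
    -- pointwise bound on |stepL μ₁ y - stepL μ₂ y|
    set A : S → ℝ := stepL P μ₁ with hA
    set B : S → ℝ := stepL P μ₂ with hB
    have key : ∀ y, V y * |A y - B y|
        ≤ m⁻¹ * ∑' x, ∑' z, (p x * q z) * (V y * |P x y - P z y|) := by
      intro y
      set Bq : ℝ := ∑' z, q z * P z y with hBq
      have hqP : Summable (fun z => q z * P z y) := summable_mul_P hP0 hP1 hqs y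
      have hpP : Summable (fun x => p x * P x y) := summable_mul_P hP0 hP1 hps y
      have hAB : A y - B y = (∑' x, p x * P x y) - (∑' x, q x * P x y) := by
        have e : A y - B y = ∑' x, η x * P x y := by
          simp only [hA, hB, stepL]
          rw [← Summable.tsum_sub (summable_mul_P hP0 hP1 hμ₁s y) (summable_mul_P hP0 hP1 hμ₂s y)]
          exact tsum_congr (fun x => by simp only [hη]; ring)
        rw [e, ← Summable.tsum_sub hpP hqP]
        refine tsum_congr (fun x => ?_)
        rw [← hpq_sub x]; ring
      -- inner sums
      have s_inner : ∀ x, Summable (fun z => (p x * q z) * (P x y - P z y)) := by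
        intro x
        have : Summable (fun z => (p x * P x y) * q z - p x * (q z * P z y)) :=
          (hqs.mul_left _).sub (hqP.mul_left _)
        exact this.congr (fun z => by ring)
      have e_inner : ∀ x, (∑' z, (p x * q z) * (P x y - P z y))
          = p x * P x y * m - p x * Bq := by
        intro x
        have e : ∀ z, (p x * q z) * (P x y - P z y)
            = (p x * P x y) * q z - p x * (q z * P z y) := fun z => by ring
        rw [tsum_congr e, Summable.tsum_sub (hqs.mul_left _) (hqP.mul_left _),
          tsum_mul_left, tsum_mul_left, ← hqm, ← hBq]
      have hdom : ∀ x, Summable (fun z => p x * P x y * q z + p x * (q z * P z y)) :=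
        fun x => (hqs.mul_left (p x * P x y)).add (hqP.mul_left (p x))
      have hptw : ∀ x z, (p x * q z) * |P x y - P z y|
          ≤ p x * P x y * q z + p x * (q z * P z y) := by
        intro x z
        have h1 : |P x y - P z y| ≤ P x y + P z y := by
          refine abs_sub _ _ |>.trans ?_
          rw [abs_of_nonneg (hP0 x y), abs_of_nonneg (hP0 z y)]
        have h2 : 0 ≤ p x * q z := mul_nonneg (hp0 x) (hq0 z)
        calc (p x * q z) * |P x y - P z y| ≤ (p x * q z) * (P x y + P z y) :=
              mul_le_mul_of_nonneg_left h1 h2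
          _ = p x * P x y * q z + p x * (q z * P z y) := by ring
      have s_inner_abs : ∀ x, Summable (fun z => (p x * q z) * |P x y - P z y|) := by
        intro x
        exact Summable.of_nonneg_of_le
          (fun z => mul_nonneg (mul_nonneg (hp0 x) (hq0 z)) (abs_nonneg _))
          (fun z => hptw x z) (hdom x)
      set g : S → ℝ := fun x => ∑' z, (p x * q z) * |P x y - P z y| with hg
      have hg0 : ∀ x, 0 ≤ g x := fun x => tsum_nonneg
        (fun z => mul_nonneg (mul_nonneg (hp0 x) (hq0 z)) (abs_nonneg _))
      have hg_le : ∀ x, g x ≤ p x * P x y * m + p x * Bq := by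
        intro x
        have e2 : (∑' z, ((p x * P x y) * q z + p x * (q z * P z y)))
            = p x * P x y * m + p x * Bq := by
          rw [Summable.tsum_add (hqs.mul_left _) (hqP.mul_left _), tsum_mul_left,
            tsum_mul_left, ← hqm, ← hBq]
        rw [← e2]
        exact Summable.tsum_le_tsum (fun z => hptw x z) (s_inner_abs x) (hdom x)
      have hgs : Summable g := by
        refine Summable.of_nonneg_of_le hg0 hg_le ?_
        exact ((hpP.mul_right m).add (hps.mul_right Bq)).congr (fun x => by ring)
      have habs_f : ∀ x, |∑' z, (p x * q z) * (P x y - P z y)| ≤ g x := by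
        intro x
        have hsn : Summable (fun z => ‖(p x * q z) * (P x y - P z y)‖) :=
          (s_inner_abs x).congr (fun z => by
            rw [Real.norm_eq_abs, abs_mul, abs_of_nonneg (mul_nonneg (hp0 x) (hq0 z))])
        have h := norm_tsum_le_tsum_norm hsn
        rw [Real.norm_eq_abs] at h
        exact h.trans_eq (tsum_congr (fun z => by
          rw [Real.norm_eq_abs, abs_mul, abs_of_nonneg (mul_nonneg (hp0 x) (hq0 z))]))
      have claim1 : m * (A y - B y) = ∑' x, (∑' z, (p x * q z) * (P x y - P z y)) := by
        rw [tsum_congr e_inner, Summable.tsum_sub (hpP.mul_right m) (hps.mul_right Bq),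
          tsum_mul_right, tsum_mul_right, hAB, hBq, ← hmdef]
        ring
      have claim2 : m * |A y - B y| ≤ ∑' x, g x := by
        have h1 : |m * (A y - B y)| = m * |A y - B y| := by
          rw [abs_mul, abs_of_nonneg hm0]
        rw [← h1, claim1]
        have hsnf : Summable (fun x => ‖∑' z, (p x * q z) * (P x y - P z y)‖) :=
          Summable.of_nonneg_of_le (fun x => norm_nonneg _)
            (fun x => by rw [Real.norm_eq_abs]; exact habs_f x) hgs
        have hbound := norm_tsum_le_tsum_norm hsnf
        rw [Real.norm_eq_abs] at hbound
        exact hbound.trans (Summable.tsum_le_tsum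
          (fun x => by rw [Real.norm_eq_abs]; exact habs_f x) hsnf hgs)
      -- combine
      have e3 : (∑' x, ∑' z, (p x * q z) * (V y * |P x y - P z y|))
          = V y * ∑' x, g x := by
        rw [← tsum_mul_left]
        refine tsum_congr (fun x => ?_)
        simp only [hg]
        rw [← tsum_mul_left]
        exact tsum_congr (fun z => by ring)
      rw [e3]
      have h4 : |A y - B y| ≤ m⁻¹ * ∑' x, g x := by
        rw [inv_mul_eq_div, le_div_iff₀ hm', mul_comm]
        exact claim2
      calc V y * |A y - B y| ≤ V y * (m⁻¹ * ∑' x, g x) :=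
            mul_le_mul_of_nonneg_left h4 (hV0 y)
        _ = m⁻¹ * (V y * ∑' x, g x) := by ring
    -- ENNReal aggregation
    have hPle1 : ∀ x y, P x y ≤ 1 := P_le_one hP0 hP1
    have habsP : ∀ x z y, |P x y - P z y| ≤ P x y + P z y := by
      intro x z y
      refine abs_sub _ _ |>.trans ?_
      rw [abs_of_nonneg (hP0 x y), abs_of_nonneg (hP0 z y)]
    have hsTxz : ∀ x z, Summable (fun y => V y * |P x y - P z y|) := by
      intro x z
      have hdom : Summable (fun y => V y * P x y + V y * P z y) := (hsVP x).add (hsVP z)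
      refine Summable.of_nonneg_of_le (fun y => mul_nonneg (hV0 y) (abs_nonneg _))
        (fun y => ?_) hdom
      calc V y * |P x y - P z y| ≤ V y * (P x y + P z y) :=
            mul_le_mul_of_nonneg_left (habsP x z y) (hV0 y)
        _ = V y * P x y + V y * P z y := by ring
    have hz_nonneg : ∀ y x z, (0:ℝ) ≤ (p x * q z) * (V y * |P x y - P z y|) :=
      fun y x z => mul_nonneg (mul_nonneg (hp0 x) (hq0 z))
        (mul_nonneg (hV0 y) (abs_nonneg _))
    have habs2 : ∀ x z y, |P x y - P z y| ≤ 2 := by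
      intro x z y
      have := habsP x z y; have := hPle1 x y; have := hPle1 z y; linarith
    have hz_sum : ∀ y x, Summable (fun z => (p x * q z) * (V y * |P x y - P z y|)) := by
      intro y x
      refine Summable.of_nonneg_of_le (fun z => hz_nonneg y x z) (fun z => ?_)
        (hqs.mul_left (p x * (V y * 2)))
      calc (p x * q z) * (V y * |P x y - P z y|)
          ≤ (p x * q z) * (V y * 2) := by
            refine mul_le_mul_of_nonneg_left ?_ (mul_nonneg (hp0 x) (hq0 z))
            exact mul_le_mul_of_nonneg_left (habs2 x z y) (hV0 y)
        _ = p x * (V y * 2) * q z := by ring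
    have hz_le : ∀ y x, (∑' z, (p x * q z) * (V y * |P x y - P z y|))
        ≤ p x * (V y * 2) * m := by
      intro y x
      have e : (∑' z, p x * (V y * 2) * q z) = p x * (V y * 2) * m := by
        rw [tsum_mul_left, ← hqm]
      rw [← e]
      refine Summable.tsum_le_tsum (fun z => ?_) (hz_sum y x) (hqs.mul_left _)
      calc (p x * q z) * (V y * |P x y - P z y|)
          ≤ (p x * q z) * (V y * 2) := by
            refine mul_le_mul_of_nonneg_left ?_ (mul_nonneg (hp0 x) (hq0 z))
            exact mul_le_mul_of_nonneg_left (habs2 x z y) (hV0 y)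
        _ = p x * (V y * 2) * q z := by ring
    have hx_sum : ∀ y, Summable (fun x => ∑' z, (p x * q z) * (V y * |P x y - P z y|)) := by
      intro y
      refine Summable.of_nonneg_of_le
        (fun x => tsum_nonneg (fun z => hz_nonneg y x z)) (fun x => hz_le y x)
        ((hps.mul_right (V y * 2 * m)).congr (fun x => by ring))
    have step1 : normU V (stepL P μ₁ - stepL P μ₂)
        ≤ ∑' y, ENNReal.ofReal
            (m⁻¹ * ∑' x, ∑' z, (p x * q z) * (V y * |P x y - P z y|)) := by
      rw [normU]
      refine ENNReal.tsum_le_tsum (fun y => ENNReal.ofReal_le_ofReal ?_)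
      simp only [Pi.sub_apply]
      exact key y
    have step2 : ∀ y, ENNReal.ofReal
          (m⁻¹ * ∑' x, ∑' z, (p x * q z) * (V y * |P x y - P z y|))
        = ENNReal.ofReal m⁻¹
          * ∑' x, ∑' z, ENNReal.ofReal ((p x * q z) * (V y * |P x y - P z y|)) := by
      intro y
      rw [ENNReal.ofReal_mul (inv_nonneg.2 hm0)]
      congr 1
      rw [← tsum_ofReal_eq (fun x => tsum_nonneg (fun z => hz_nonneg y x z)) (hx_sum y)]
      exact tsum_congr (fun x =>
        (tsum_ofReal_eq (fun z => hz_nonneg y x z) (hz_sum y x)).symm)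
    have hIz : ∀ x z, (∑' y, ENNReal.ofReal ((p x * q z) * (V y * |P x y - P z y|)))
        = ENNReal.ofReal (p x * q z)
          * ENNReal.ofReal (∑' y, V y * |P x y - P z y|) := by
      intro x z
      rw [tsum_congr (fun y =>
        ENNReal.ofReal_mul (mul_nonneg (hp0 x) (hq0 z))), ENNReal.tsum_mul_left,
        tsum_ofReal_eq (fun y => mul_nonneg (hV0 y) (abs_nonneg _)) (hsTxz x z)]
    have step3 : (∑' y, ENNReal.ofReal m⁻¹
          * ∑' x, ∑' z, ENNReal.ofReal ((p x * q z) * (V y * |P x y - P z y|)))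
        = ENNReal.ofReal m⁻¹ * ∑' x, ∑' z, ∑' y,
            ENNReal.ofReal ((p x * q z) * (V y * |P x y - P z y|)) := by
      rw [ENNReal.tsum_mul_left]
      congr 1
      rw [ENNReal.tsum_comm]
      exact tsum_congr (fun x => ENNReal.tsum_comm)
    have step4 : ∀ x z, (∑' y, ENNReal.ofReal ((p x * q z) * (V y * |P x y - P z y|)))
        ≤ ENNReal.ofReal (p x * q z) * ENNReal.ofReal (a * (V x + V z)) := by
      intro x z
      rw [hIz x z]
      exact mul_le_mul_right (ENNReal.ofReal_le_ofReal (htwo x z)) _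
    have hqof : (∑' z, ENNReal.ofReal (q z)) = ENNReal.ofReal m := by
      rw [tsum_ofReal_eq hq0 hqs, hqm]
    have hpof : (∑' x, ENNReal.ofReal (p x)) = ENNReal.ofReal m := by
      rw [tsum_ofReal_eq hp0 hps, ← hmdef]
    have term_eq : ∀ x z, ENNReal.ofReal (p x * q z) * ENNReal.ofReal (a * (V x + V z))
        = ENNReal.ofReal a * (ENNReal.ofReal (V x * p x) * ENNReal.ofReal (q z)
            + ENNReal.ofReal (p x) * ENNReal.ofReal (V z * q z)) := by
      intro x z
      rw [← ENNReal.ofReal_mul (mul_nonneg (hV0 x) (hp0 x)),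
        ← ENNReal.ofReal_mul (hp0 x),
        ← ENNReal.ofReal_add (mul_nonneg (mul_nonneg (hV0 x) (hp0 x)) (hq0 z))
          (mul_nonneg (hp0 x) (mul_nonneg (hV0 z) (hq0 z))),
        ← ENNReal.ofReal_mul ha0,
        ← ENNReal.ofReal_mul (mul_nonneg (hp0 x) (hq0 z))]
      exact congrArg ENNReal.ofReal (by ring)
    set Np : ℝ≥0∞ := ∑' x, ENNReal.ofReal (V x * p x) with hNp
    set Nq : ℝ≥0∞ := ∑' x, ENNReal.ofReal (V x * q x) with hNq
    have step5 : (∑' x, ∑' z, ENNReal.ofReal (p x * q z) * ENNReal.ofReal (a * (V x + V z)))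
        = ENNReal.ofReal a * (ENNReal.ofReal m * (Np + Nq)) := by
      have inner : ∀ x, (∑' z, ENNReal.ofReal (p x * q z) * ENNReal.ofReal (a * (V x + V z)))
          = ENNReal.ofReal a * (ENNReal.ofReal (V x * p x) * ENNReal.ofReal m
              + ENNReal.ofReal (p x) * Nq) := by
        intro x
        rw [tsum_congr (fun z => term_eq x z), ENNReal.tsum_mul_left]
        congr 1
        rw [ENNReal.tsum_add, ENNReal.tsum_mul_left, ENNReal.tsum_mul_left, hqof]
      rw [tsum_congr inner, ENNReal.tsum_mul_left]
      congr 1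
      rw [ENNReal.tsum_add, ENNReal.tsum_mul_right, ENNReal.tsum_mul_right, hpof]
      ring
    have hminv : ENNReal.ofReal m⁻¹ * ENNReal.ofReal m = 1 := by
      rw [ENNReal.ofReal_inv_of_pos hm']
      exact ENNReal.inv_mul_cancel (ENNReal.ofReal_pos.2 hm').ne' ENNReal.ofReal_ne_top
    have hNpq : Np + Nq = normU V (μ₁ - μ₂) := by
      rw [hNp, hNq, ← ENNReal.tsum_add, normU]
      refine tsum_congr (fun x => ?_)
      rw [← ENNReal.ofReal_add (mul_nonneg (hV0 x) (hp0 x)) (mul_nonneg (hV0 x) (hq0 x))]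
      refine congrArg ENNReal.ofReal ?_
      have h1 : (μ₁ - μ₂) x = η x := by simp [hη]
      rw [h1, ← hpq_add x]
      ring
    calc normU V (stepL P μ₁ - stepL P μ₂)
        ≤ ∑' y, ENNReal.ofReal
            (m⁻¹ * ∑' x, ∑' z, (p x * q z) * (V y * |P x y - P z y|)) := step1
      _ = ENNReal.ofReal m⁻¹ * ∑' x, ∑' z, ∑' y,
            ENNReal.ofReal ((p x * q z) * (V y * |P x y - P z y|)) := by
          rw [tsum_congr step2]; exact step3
      _ ≤ ENNReal.ofReal m⁻¹
            * ∑' x, ∑' z, ENNReal.ofReal (p x * q z) * ENNReal.ofReal (a * (V x + V z)) := by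
          refine mul_le_mul_right ?_ _
          exact ENNReal.tsum_le_tsum (fun x => ENNReal.tsum_le_tsum (fun z => step4 x z))
      _ = ENNReal.ofReal m⁻¹ * (ENNReal.ofReal a * (ENNReal.ofReal m * (Np + Nq))) := by
          rw [step5]
      _ = ENNReal.ofReal a * ((ENNReal.ofReal m⁻¹ * ENNReal.ofReal m) * (Np + Nq)) := by
          ring
      _ = ENNReal.ofReal a * normU V (μ₁ - μ₂) := by rw [hminv, one_mul, hNpq]
lemma case1_bound {α β γ K R a : ℝ} (hα : 0 < α) (hα1 : α ≤ 1) (hγ0 : 0 < γ)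
    (hβ0 : 0 < β) (hβt : β * (2*γ*R + 2*K) ≤ α) (ha₁ : 1 - α/2 ≤ a) :
    ∀ s : ℝ, 2 ≤ s → s ≤ 2*R → 2 - 2*α + β*(γ*s + 2*K) ≤ a * (2 + β*s) := by
  intro s hs2 hsR
  have hβs : 0 ≤ β*s := mul_nonneg hβ0.le (by linarith)
  have h1 : γ*s ≤ 2*γ*R := by nlinarith
  have h2 : β*(γ*s + 2*K) ≤ β*(2*γ*R + 2*K) := by nlinarith
  have h3 : 0 ≤ (1 - α/2) * (β*s) := mul_nonneg (by linarith) hβs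
  have h4 : (1 - α/2) * (2 + β*s) ≤ a * (2 + β*s) :=
    mul_le_mul_of_nonneg_right ha₁ (by linarith)
  nlinarith

lemma case2_bound {β γ K R γ₀ a : ℝ} (hβ0 : 0 < β) (hγ0 : 0 < γ) (hK0 : 0 < K)
    (hR0 : 0 < R) (hγ₀def : γ₀ = γ + 2*K/R) (hγ₀1 : γ₀ < 1)
    (ha₂ : (2 + β*γ₀*R)/(2 + β*R) ≤ a) :
    ∀ s : ℝ, R ≤ s → 2 ≤ s → 2 + β*(γ*s + 2*K) ≤ a * (2 + β*s) := by
  intro s hsR hs2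
  have hD : (0:ℝ) < 2 + β*R := by positivity
  have hγ₀0 : (0:ℝ) < γ₀ := by rw [hγ₀def]; positivity
  have h1 : γ*s + 2*K ≤ γ₀*s := by
    have e : 2*K/R*R = 2*K := div_mul_cancel₀ _ hR0.ne'
    have h2 : 2*K/R*R ≤ 2*K/R*s := mul_le_mul_of_nonneg_left hsR (by positivity)
    rw [hγ₀def]; nlinarith
  have hDs : (0:ℝ) < 2 + β*s := by nlinarith
  have h2 : 2 + β*(γ₀*s) ≤ ((2 + β*γ₀*R)/(2 + β*R)) * (2 + β*s) := by
    rw [div_mul_eq_mul_div, le_div_iff₀ hD]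
    nlinarith [mul_nonneg (mul_nonneg hβ0.le (sub_nonneg.2 hsR)) (sub_nonneg.2 hγ₀1.le)]
  have h3 : ((2 + β*γ₀*R)/(2 + β*R)) * (2 + β*s) ≤ a * (2 + β*s) := by nlinarith
  have h4 : β*(γ*s + 2*K) ≤ β*(γ₀*s) := by nlinarith
  linarith

lemma normU_le_mul {W₁ W₂ : S → ℝ} {c : ℝ} (hc : 0 ≤ c) (h1 : ∀ x, 0 ≤ W₁ x)
    (hle : ∀ x, W₁ x ≤ c * W₂ x) (μ : S → ℝ) :
    normU W₁ μ ≤ ENNReal.ofReal c * normU W₂ μ := by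
  rw [normU, normU, ← ENNReal.tsum_mul_left]
  refine ENNReal.tsum_le_tsum (fun x => ?_)
  rw [← ENNReal.ofReal_mul hc]
  refine ENNReal.ofReal_le_ofReal ?_
  calc W₁ x * |μ x| ≤ (c * W₂ x) * |μ x| :=
        mul_le_mul_of_nonneg_right (hle x) (abs_nonneg _)
    _ = c * (W₂ x * |μ x|) := by ring

lemma normU_sub_le {W : S → ℝ} (hW : ∀ x, 0 ≤ W x) (f g : S → ℝ) :
    normU W (f - g) ≤ normU W f + normU W g := by
  rw [normU, normU, normU, ← ENNReal.tsum_add]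
  refine ENNReal.tsum_le_tsum (fun x => ?_)
  rw [← ENNReal.ofReal_add (mul_nonneg (hW x) (abs_nonneg _))
    (mul_nonneg (hW x) (abs_nonneg _))]
  refine ENNReal.ofReal_le_ofReal ?_
  have h1 : |f x - g x| ≤ |f x| + |g x| := abs_sub _ _
  have := hW x
  calc W x * |(f - g) x| = W x * |f x - g x| := by rw [Pi.sub_apply]
    _ ≤ W x * (|f x| + |g x|) := mul_le_mul_of_nonneg_left h1 (hW x)
    _ = W x * |f x| + W x * |g x| := by ring

lemma normU_add_le {W : S → ℝ} (hW : ∀ x, 0 ≤ W x) (f g : S → ℝ) :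
    normU W (f + g) ≤ normU W f + normU W g := by
  rw [normU, normU, normU, ← ENNReal.tsum_add]
  refine ENNReal.tsum_le_tsum (fun x => ?_)
  rw [← ENNReal.ofReal_add (mul_nonneg (hW x) (abs_nonneg _))
    (mul_nonneg (hW x) (abs_nonneg _))]
  refine ENNReal.ofReal_le_ofReal ?_
  have h1 : |f x + g x| ≤ |f x| + |g x| := abs_add_le _ _
  calc W x * |(f + g) x| = W x * |f x + g x| := by rw [Pi.add_apply]
    _ ≤ W x * (|f x| + |g x|) := mul_le_mul_of_nonneg_left h1 (hW x)
    _ = W x * |f x| + W x * |g x| := by ring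

lemma le_toReal_of_ofReal_le {x : ℝ} {E : ℝ≥0∞} (hx : 0 ≤ x) (hE : E ≠ ⊤)
    (h : ENNReal.ofReal x ≤ E) : x ≤ E.toReal := by
  have := ENNReal.toReal_mono hE h
  rwa [ENNReal.toReal_ofReal hx] at this

lemma normU_self_sub {W : S → ℝ} (f : S → ℝ) : normU W (f - f) = 0 := by
  rw [normU]
  simp

lemma normU_zero {W : S → ℝ} : normU W (0 : S → ℝ) = 0 := by
  rw [normU]
  simp

lemma single_le_normU {W : S → ℝ} (hW : ∀ x, 1 ≤ W x) (μ : S → ℝ) (x : S) :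
    ENNReal.ofReal (|μ x|) ≤ normU W μ := by
  refine le_trans ?_ (ENNReal.le_tsum x)
  refine ENNReal.ofReal_le_ofReal ?_
  nlinarith [abs_nonneg (μ x), hW x]

end HarrisAux

open HarrisAux in
/-- Harris-type geometric ergodicity: under the drift condition
`PU ≤ γU + K` and the minorization condition on the sublevel set `{U ≤ R}` with
`R > 2K/(1−γ)`, the stochastic matrix `P` admits a unique invariant probability
distribution `π` with `‖π‖_U < ∞`, and iterates of `P` contract the `U`-weighted
total variation distance between probability distributions geometrically. -/
theorem harris_geometric_ergodicity {S : Type*} [Countable S]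
    (P : S → S → ℝ) (hP0 : ∀ x y, 0 ≤ P x y) (hP1 : ∀ x, HasSum (P x) 1)
    (U : S → ℝ) (hU : ∀ x, 1 ≤ U x)
    (γ K : ℝ) (hγ : γ ∈ Set.Ioo (0 : ℝ) 1)
    (hPUsum : ∀ x, Summable fun y => P x y * U y)
    (hdrift : ∀ x, (∑' y, P x y * U y) ≤ γ * U x + K)
    (R : ℝ) (hR : R > 2 * K / (1 - γ))
    (α : ℝ) (hα : 0 < α)
    (ν : S → ℝ) (hν0 : ∀ y, 0 ≤ ν y) (hν1 : HasSum ν 1)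
    (hminor : ∀ x, U x ≤ R → ∀ y, α * ν y ≤ P x y) :
    (∃! π : S → ℝ,
        (∀ x, 0 ≤ π x) ∧ HasSum π 1 ∧ normU U π < ⊤ ∧ stepL P π = π) ∧
    ∃ c₁ > (0 : ℝ), ∃ ρ ∈ Set.Ioo (0 : ℝ) 1,
      ∀ μ₁ μ₂ : S → ℝ,
        (∀ x, 0 ≤ μ₁ x) → HasSum μ₁ 1 → normU U μ₁ < ⊤ →
        (∀ x, 0 ≤ μ₂ x) → HasSum μ₂ 1 → normU U μ₂ < ⊤ →
        ∀ n : ℕ,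
          normU U ((stepL P)^[n] μ₁ - (stepL P)^[n] μ₂)
            ≤ ENNReal.ofReal (c₁ * ρ ^ n) * normU U (μ₁ - μ₂) := by
  classical
  obtain ⟨hγ0, hγ1⟩ := hγ
  have h1γ : (0:ℝ) < 1 - γ := by linarith
  -- S is nonempty
  have hSne : Nonempty S := by
    by_contra h
    rw [not_nonempty_iff] at h
    have h0 : HasSum ν 0 := by
      have : ν = fun _ => 0 := funext (fun x => (h.false x).elim)
      rw [this]; exact hasSum_zero
    exact one_ne_zero (hν1.unique h0)
  -- lower bound on K via the infimum of U
  have hbdd : BddBelow (Set.range U) := ⟨1, fun r ⟨x, hx⟩ => hx ▸ hU x⟩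
  set u : ℝ := ⨅ x, U x with hu
  have hu1 : 1 ≤ u := le_ciInf hU
  have hux : ∀ x, u ≤ U x := fun x => ciInf_le hbdd x
  have hudrift : u ≤ γ * u + K := by
    refine le_of_forall_pos_le_add (fun ε hε => ?_)
    have hεγ : 0 < ε / γ := div_pos hε hγ0
    obtain ⟨x, hx⟩ := exists_lt_of_ciInf_lt
      (show (⨅ x, U x) < u + ε / γ by rw [← hu]; linarith)
    have h1 : u ≤ ∑' y, P x y * U y := by
      have e : (∑' y, P x y * u) = u := by
        rw [tsum_mul_right, (hP1 x).tsum_eq, one_mul]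
      rw [← e]
      refine Summable.tsum_le_tsum (fun y => ?_) ((hP1 x).summable.mul_right u) (hPUsum x)
      exact mul_le_mul_of_nonneg_left (hux y) (hP0 x y)
    have h2 := hdrift x
    have h3 : γ * U x ≤ γ * (u + ε / γ) := mul_le_mul_of_nonneg_left hx.le hγ0.le
    have h4 : γ * (u + ε / γ) = γ * u + ε := by field_simp
    linarith
  have hK1 : 1 - γ ≤ K := by nlinarith
  have hK0 : (0:ℝ) < K := by linarith
  have hR0 : (0:ℝ) < R := lt_trans (div_pos (by linarith) h1γ) hR
  have hRK : 2 * K < R * (1 - γ) := by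
    have := (div_lt_iff₀ h1γ).1 hR
    linarith
  have huR : u < R := by nlinarith
  obtain ⟨x₀, hx₀⟩ := exists_lt_of_ciInf_lt huR
  have hα1 : α ≤ 1 := by
    have h1 : (∑' y, α * ν y) ≤ ∑' y, P x₀ y :=
      Summable.tsum_le_tsum (fun y => hminor x₀ hx₀.le y) (hν1.summable.mul_left α)
        (hP1 x₀).summable
    rw [tsum_mul_left, hν1.tsum_eq, (hP1 x₀).tsum_eq, mul_one] at h1
    exact h1
  -- the constants
  obtain ⟨β, hβ0, hβt⟩ : ∃ β : ℝ, 0 < β ∧ β * (2*γ*R + 2*K) ≤ α := by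
    refine ⟨α / (2*γ*R + 2*K + 1), by positivity, ?_⟩
    rw [div_mul_eq_mul_div, div_le_iff₀ (by positivity)]
    nlinarith
  have hγ₀1 : γ + 2*K/R < 1 := by
    have : 2*K/R < 1 - γ := (div_lt_iff₀ hR0).2 (by nlinarith)
    linarith
  obtain ⟨a, ha0, ha1, ha₁a, ha₂a⟩ :
      ∃ a : ℝ, 0 < a ∧ a < 1 ∧ 1 - α/2 ≤ a ∧ (2 + β*(γ + 2*K/R)*R)/(2 + β*R) ≤ a := by
    refine ⟨max (1 - α/2) ((2 + β*(γ + 2*K/R)*R)/(2 + β*R)), ?_, ?_,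
      le_max_left _ _, le_max_right _ _⟩
    · refine lt_of_lt_of_le ?_ (le_max_right _ _)
      have hγ₀0 : (0:ℝ) < γ + 2*K/R := by positivity
      positivity
    · refine max_lt (by linarith) ?_
      rw [div_lt_one (by positivity)]
      nlinarith [mul_pos (mul_pos hβ0 hR0) (sub_pos.2 hγ₀1)]
  have hcase1 := case1_bound hα hα1 hγ0 hβ0 hβt ha₁a
  have hcase2 := case2_bound hβ0 hγ0 hK0 hR0 rfl hγ₀1 ha₂a
  -- the weight V and the one-step contraction
  set V : S → ℝ := fun y => 1 + β*U y with hVdef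
  have hV1 : ∀ y, 1 ≤ V y := fun y => by
    simp only [hVdef]; nlinarith [hU y, hβ0]
  have hV0 : ∀ y, 0 ≤ V y := fun y => le_trans zero_le_one (hV1 y)
  have hsVP : ∀ w, Summable (fun y => V y * P w y) := by
    intro w
    have h : Summable (fun y => P w y + β * (P w y * U y)) :=
      (hP1 w).summable.add ((hPUsum w).mul_left β)
    exact h.congr (fun y => by simp only [hVdef]; ring)
  have htwo : ∀ x z, (∑' y, V y * |P x y - P z y|) ≤ a * (V x + V z) := by
    have h := two_point hP0 hP1 hU hγ0.le hPUsum hdrift hα hν0 hν1 hminor hβ0 a ha0.le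
      hcase1 hcase2
    intro x z
    have := h x z
    simpa [hVdef] using this
  have hcontr : ∀ {μ₁ μ₂ : S → ℝ}, (∀ x, 0 ≤ μ₁ x) → HasSum μ₁ 1 →
      (∀ x, 0 ≤ μ₂ x) → HasSum μ₂ 1 →
      normU V (stepL P μ₁ - stepL P μ₂) ≤ ENNReal.ofReal a * normU V (μ₁ - μ₂) :=
    fun h1 h2 h3 h4 => contraction_step hP0 hP1 hV1 hsVP ha0.le htwo h1 h2 h3 h4
  -- norm comparisons
  have cmp1 : ∀ μ : S → ℝ, normU U μ ≤ ENNReal.ofReal β⁻¹ * normU V μ := by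
    refine normU_le_mul (by positivity) (fun x => le_trans zero_le_one (hU x)) (fun x => ?_)
    simp only [hVdef]
    rw [mul_add, mul_one]
    have e : β⁻¹ * (β * U x) = U x := by field_simp
    nlinarith [hU x, hβ0, inv_pos.2 hβ0]
  have cmp2 : ∀ μ : S → ℝ, normU V μ ≤ ENNReal.ofReal (1 + β) * normU U μ := by
    refine normU_le_mul (by positivity) hV0 (fun x => ?_)
    simp only [hVdef]
    nlinarith [hU x, hβ0]
  -- preservation of probability by iterates
  have hinv : ∀ (μ : S → ℝ), (∀ x, 0 ≤ μ x) → HasSum μ 1 → ∀ n,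
      (∀ x, 0 ≤ (stepL P)^[n] μ x) ∧ HasSum ((stepL P)^[n] μ) 1 := by
    intro μ h0 h1 n
    induction n with
    | zero => exact ⟨h0, h1⟩
    | succ n ih =>
      rw [Function.iterate_succ_apply']
      exact ⟨stepL_nonneg hP0 ih.1, hasSum_stepL hP0 hP1 ih.1 ih.2⟩
  -- geometric contraction of iterates in the V norm
  have hgeo : ∀ (μ₁ μ₂ : S → ℝ), (∀ x, 0 ≤ μ₁ x) → HasSum μ₁ 1 →
      (∀ x, 0 ≤ μ₂ x) → HasSum μ₂ 1 → ∀ n,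
      normU V ((stepL P)^[n] μ₁ - (stepL P)^[n] μ₂)
        ≤ ENNReal.ofReal a ^ n * normU V (μ₁ - μ₂) := by
    intro μ₁ μ₂ h10 h11 h20 h21 n
    induction n with
    | zero => simp
    | succ n ih =>
      rw [Function.iterate_succ_apply', Function.iterate_succ_apply']
      calc normU V (stepL P ((stepL P)^[n] μ₁) - stepL P ((stepL P)^[n] μ₂))
          ≤ ENNReal.ofReal a * normU V ((stepL P)^[n] μ₁ - (stepL P)^[n] μ₂) :=
            hcontr (hinv μ₁ h10 h11 n).1 (hinv μ₁ h10 h11 n).2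
              (hinv μ₂ h20 h21 n).1 (hinv μ₂ h20 h21 n).2
        _ ≤ ENNReal.ofReal a * (ENNReal.ofReal a ^ n * normU V (μ₁ - μ₂)) :=
            mul_le_mul_right ih _
        _ = ENNReal.ofReal a ^ (n+1) * normU V (μ₁ - μ₂) := by ring
  -- basic facts about the V norm of differences
  have hnorm_eq : ∀ (f g : S → ℝ),
      normU V (f - g) = ∑' x, ENNReal.ofReal (V x * |f x - g x|) :=
    fun f g => tsum_congr (fun x => by rw [Pi.sub_apply])
  constructor
  · -- existence and uniqueness of the invariant distribution
    set μ₀ : S → ℝ := fun x => if x = x₀ then (1:ℝ) else 0 with hμ₀def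
    have hμ₀0 : ∀ x, 0 ≤ μ₀ x := fun x => by
      simp only [hμ₀def]; split <;> norm_num
    have hμ₀1 : HasSum μ₀ 1 := hasSum_ite_eq x₀ 1
    have hμ₀U : normU U μ₀ < ⊤ := by
      rw [normU, tsum_eq_single x₀ (fun b hb => by simp [hμ₀def, if_neg hb])]
      exact ENNReal.ofReal_lt_top
    set μseq : ℕ → S → ℝ := fun n => (stepL P)^[n] μ₀ with hμseqdef
    have hμn0 : ∀ n x, 0 ≤ μseq n x := fun n => (hinv μ₀ hμ₀0 hμ₀1 n).1
    have hμn1 : ∀ n, HasSum (μseq n) 1 := fun n => (hinv μ₀ hμ₀0 hμ₀1 n).2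
    have hμns : ∀ n, Summable (μseq n) := fun n => (hμn1 n).summable
    have hμnU : ∀ n, normU U (μseq n) < ⊤ := by
      intro n
      induction n with
      | zero => exact hμ₀U
      | succ n ih =>
        have h := normU_stepL_le hP0 hP1 hU hγ0.le hK0.le hPUsum hdrift
          (hμn0 n) (hμn1 n)
        have e : μseq (n+1) = stepL P (μseq n) := by
          simp only [hμseqdef]; rw [Function.iterate_succ_apply']
        rw [e]
        refine lt_of_le_of_lt h ?_
        exact ENNReal.add_lt_top.2 ⟨ENNReal.mul_lt_top ENNReal.ofReal_lt_top ih,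
          ENNReal.ofReal_lt_top⟩
    have hμnV : ∀ n, normU V (μseq n) < ⊤ := fun n =>
      lt_of_le_of_lt (cmp2 _) (ENNReal.mul_lt_top ENNReal.ofReal_lt_top (hμnU n))
    set D : ℝ≥0∞ := normU V (μseq 1 - μseq 0) with hDdef
    have hDlt : D < ⊤ :=
      lt_of_le_of_lt (normU_sub_le hV0 _ _) (ENNReal.add_lt_top.2 ⟨hμnV 1, hμnV 0⟩)
    have hstepdiff : ∀ n, normU V (μseq (n+1) - μseq n) ≤ ENNReal.ofReal a ^ n * D := by
      intro n
      have h := hgeo (μseq 1) (μseq 0) (hμn0 1) (hμn1 1) (hμn0 0) (hμn1 0) n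
      have e1 : (stepL P)^[n] (μseq 1) = μseq (n+1) := by
        simp only [hμseqdef]
        rw [Function.iterate_one, ← Function.iterate_succ_apply]
      have e0 : (stepL P)^[n] (μseq 0) = μseq n := by
        simp only [hμseqdef, Function.iterate_zero, id]
      rw [e1, e0] at h
      exact h
    set G : ℝ≥0∞ := (1 - ENNReal.ofReal a)⁻¹ with hGdef
    have hGlt : G < ⊤ := by
      rw [hGdef, ENNReal.inv_lt_top]
      exact tsub_pos_of_lt (ENNReal.ofReal_lt_one.2 ha1)
    have hDG : D * G < ⊤ := ENNReal.mul_lt_top hDlt hGlt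
    have hEfin : ∀ n, ENNReal.ofReal a ^ n * (D * G) ≠ ⊤ := fun n =>
      (ENNReal.mul_lt_top
        (ENNReal.pow_lt_top ENNReal.ofReal_lt_top) hDG).ne
    have hEtoReal : ∀ n, (ENNReal.ofReal a ^ n * (D * G)).toReal
        = a ^ n * (D * G).toReal := by
      intro n
      rw [ENNReal.toReal_mul, ENNReal.toReal_pow, ENNReal.toReal_ofReal ha0.le]
    have htail : ∀ n k, normU V (μseq (n+k) - μseq n)
        ≤ (∑ j ∈ Finset.range k, ENNReal.ofReal a ^ (n+j)) * D := by
      intro n k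
      induction k with
      | zero => simp [normU_zero]
      | succ k ih =>
        have e : μseq (n+(k+1)) - μseq n
            = (μseq (n+(k+1)) - μseq (n+k)) + (μseq (n+k) - μseq n) := by
          funext x; simp only [Pi.sub_apply, Pi.add_apply]; ring
        calc normU V (μseq (n+(k+1)) - μseq n)
            ≤ normU V (μseq (n+(k+1)) - μseq (n+k)) + normU V (μseq (n+k) - μseq n) := by
              rw [e]; exact normU_add_le hV0 _ _
          _ ≤ ENNReal.ofReal a ^ (n+k) * D
              + (∑ j ∈ Finset.range k, ENNReal.ofReal a ^ (n+j)) * D := by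
              refine add_le_add ?_ ih
              have := hstepdiff (n+k)
              rwa [show n+(k+1) = (n+k)+1 from rfl]
          _ = (∑ j ∈ Finset.range (k+1), ENNReal.ofReal a ^ (n+j)) * D := by
              rw [Finset.sum_range_succ, add_mul, add_comm]
    have hEn : ∀ n k, normU V (μseq (n+k) - μseq n)
        ≤ ENNReal.ofReal a ^ n * (D * G) := by
      intro n k
      refine (htail n k).trans ?_
      have h1 : (∑ j ∈ Finset.range k, ENNReal.ofReal a ^ (n+j))
          ≤ ENNReal.ofReal a ^ n * G := by
        have e : ∀ j ∈ Finset.range k,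
            ENNReal.ofReal a ^ (n+j) = ENNReal.ofReal a ^ n * ENNReal.ofReal a ^ j :=
          fun j _ => pow_add _ _ _
        rw [Finset.sum_congr rfl e, ← Finset.mul_sum]
        refine mul_le_mul_right ?_ _
        refine le_trans (ENNReal.sum_le_tsum _) ?_
        rw [ENNReal.tsum_geometric, hGdef]
      calc (∑ j ∈ Finset.range k, ENNReal.ofReal a ^ (n+j)) * D
          ≤ (ENNReal.ofReal a ^ n * G) * D := mul_le_mul_left h1 _
        _ = ENNReal.ofReal a ^ n * (D * G) := by ring
    -- pointwise geometric Cauchy estimates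
    have hptb : ∀ n x, |μseq (n+1) x - μseq n x| ≤ a ^ n * D.toReal := by
      intro n x
      have h1 : ENNReal.ofReal (|μseq (n+1) x - μseq n x|)
          ≤ ENNReal.ofReal a ^ n * D := by
        refine le_trans ?_ ((single_le_normU hV1 (μseq (n+1) - μseq n) x).trans
          (hstepdiff n))
        exact le_of_eq (by rw [Pi.sub_apply])
      have hfin : ENNReal.ofReal a ^ n * D
          ≠ ⊤ := (ENNReal.mul_lt_top (ENNReal.pow_lt_top ENNReal.ofReal_lt_top) hDlt).ne
      have h2 := le_toReal_of_ofReal_le (abs_nonneg _) hfin h1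
      rwa [ENNReal.toReal_mul, ENNReal.toReal_pow, ENNReal.toReal_ofReal ha0.le] at h2
    have hcauchy : ∀ x, ∃ l, Filter.Tendsto (fun n => μseq n x)
        Filter.atTop (nhds l) := by
      intro x
      refine cauchySeq_tendsto_of_complete ?_
      refine cauchySeq_of_le_geometric a D.toReal ha1 (fun n => ?_)
      rw [dist_eq_norm, Real.norm_eq_abs, abs_sub_comm, mul_comm]
      exact hptb n x
    choose π hπ using hcauchy
    -- the limit estimate
    have hclose : ∀ n, normU V ((fun x => π x) - μseq n)
        ≤ ENNReal.ofReal a ^ n * (D * G) := by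
      intro n
      rw [hnorm_eq, ENNReal.tsum_eq_iSup_sum]
      refine iSup_le (fun F => ?_)
      have hlim : Filter.Tendsto
          (fun k => ∑ x ∈ F, ENNReal.ofReal (V x * |μseq k x - μseq n x|))
          Filter.atTop
          (nhds (∑ x ∈ F, ENNReal.ofReal (V x * |π x - μseq n x|))) := by
        refine tendsto_finset_sum F (fun x _ => ?_)
        have h2 : Filter.Tendsto (fun k => V x * |μseq k x - μseq n x|)
            Filter.atTop (nhds (V x * |π x - μseq n x|)) :=
          (((hπ x).sub tendsto_const_nhds).abs).const_mul (V x)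
        exact (ENNReal.continuous_ofReal.tendsto _).comp h2
      refine le_of_tendsto hlim ?_
      filter_upwards [Filter.eventually_ge_atTop n] with k hk
      have e : n + (k - n) = k := Nat.add_sub_cancel' hk
      calc (∑ x ∈ F, ENNReal.ofReal (V x * |μseq k x - μseq n x|))
          ≤ ∑' x, ENNReal.ofReal (V x * |μseq k x - μseq n x|) :=
            ENNReal.sum_le_tsum F
        _ = normU V (μseq k - μseq n) := (hnorm_eq _ _).symm
        _ ≤ ENNReal.ofReal a ^ n * (D * G) := by
            rw [← e]; exact hEn n (k - n)
    -- properties of the limit π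
    have hπ0 : ∀ x, 0 ≤ π x := fun x => ge_of_tendsto' (hπ x) (fun n => hμn0 n x)
    have hπVfin : normU V (fun x => π x) < ⊤ := by
      have e : (fun x => π x) = ((fun x => π x) - μseq 0) + μseq 0 := by
        funext x; simp
      rw [e]
      refine lt_of_le_of_lt (normU_add_le hV0 _ _) (ENNReal.add_lt_top.2 ⟨?_, hμnV 0⟩)
      refine lt_of_le_of_lt (hclose 0) ?_
      rw [pow_zero, one_mul]
      exact hDG
    have hπUfin : normU U (fun x => π x) < ⊤ :=
      lt_of_le_of_lt (cmp1 _) (ENNReal.mul_lt_top ENNReal.ofReal_lt_top hπVfin)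
    have hπs : Summable (fun x => π x) := summable_of_normU hU hπUfin
    -- total mass one
    have habs1 : ∀ n, |(∑' x, π x) - 1| ≤ a ^ n * (D * G).toReal := by
      intro n
      have hsub : Summable (fun x => π x - μseq n x) := hπs.sub (hμns n)
      have e1 : (∑' x, (π x - μseq n x)) = (∑' x, π x) - 1 := by
        rw [Summable.tsum_sub hπs (hμns n), (hμn1 n).tsum_eq]
      have habs : Summable (fun x => |π x - μseq n x|) := hsub.abs
      have h2 : |∑' x, (π x - μseq n x)| ≤ ∑' x, |π x - μseq n x| := by
        have h := norm_tsum_le_tsum_norm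
          (habs.congr (fun x => (Real.norm_eq_abs _).symm))
        rw [Real.norm_eq_abs] at h
        exact h.trans_eq (tsum_congr (fun x => Real.norm_eq_abs _))
      have h3 : ENNReal.ofReal (∑' x, |π x - μseq n x|)
          ≤ ENNReal.ofReal a ^ n * (D * G) := by
        refine le_trans (ofReal_tsum_le (fun x => abs_nonneg _)) ?_
        have hmono : (∑' x, ENNReal.ofReal (|π x - μseq n x|))
            ≤ ∑' x, ENNReal.ofReal (V x * |π x - μseq n x|) :=
          ENNReal.tsum_le_tsum (fun x => ENNReal.ofReal_le_ofReal
            (le_mul_of_one_le_left (abs_nonneg _) (hV1 x)))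
        refine hmono.trans ?_
        rw [← hnorm_eq]; exact hclose n
      have h4 : ENNReal.ofReal (|(∑' x, π x) - 1|) ≤ ENNReal.ofReal a ^ n * (D * G) := by
        refine le_trans (ENNReal.ofReal_le_ofReal ?_) h3
        rw [← e1]; exact h2
      have h5 := le_toReal_of_ofReal_le (abs_nonneg _) (hEfin n) h4
      rwa [hEtoReal n] at h5
    have hmass : (∑' x, π x) = 1 := by
      have hlim0 : Filter.Tendsto (fun n => a ^ n * (D * G).toReal)
          Filter.atTop (nhds 0) := by
        have := (tendsto_pow_atTop_nhds_zero_of_lt_one ha0.le ha1).mul_const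
          ((D * G).toReal)
        rwa [zero_mul] at this
      have h6 : |(∑' x, π x) - 1| ≤ 0 :=
        ge_of_tendsto hlim0 (Filter.Eventually.of_forall habs1)
      have h7 : |(∑' x, π x) - 1| = 0 := le_antisymm h6 (abs_nonneg _)
      have := abs_eq_zero.1 h7
      linarith
    have hπ1 : HasSum (fun x => π x) 1 := hmass ▸ hπs.hasSum
    -- invariance
    have hsumdiff : ∀ n, (∑' x, |π x - μseq n x|) ≤ a ^ n * (D * G).toReal := by
      intro n
      have h3 : ENNReal.ofReal (∑' x, |π x - μseq n x|)
          ≤ ENNReal.ofReal a ^ n * (D * G) := by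
        refine le_trans (ofReal_tsum_le (fun x => abs_nonneg _)) ?_
        have hmono : (∑' x, ENNReal.ofReal (|π x - μseq n x|))
            ≤ ∑' x, ENNReal.ofReal (V x * |π x - μseq n x|) :=
          ENNReal.tsum_le_tsum (fun x => ENNReal.ofReal_le_ofReal
            (le_mul_of_one_le_left (abs_nonneg _) (hV1 x)))
        refine hmono.trans ?_
        rw [← hnorm_eq]; exact hclose n
      have h5 := le_toReal_of_ofReal_le (tsum_nonneg (fun x => abs_nonneg _))
        (hEfin n) h3
      rwa [hEtoReal n] at h5
    have hfix : stepL P (fun x => π x) = fun x => π x := by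
      funext y
      have t1 : Filter.Tendsto (fun n => μseq (n+1) y) Filter.atTop (nhds (π y)) :=
        (hπ y).comp (Filter.tendsto_add_atTop_nat 1)
      have hb : ∀ n, dist (μseq (n+1) y) (stepL P (fun x => π x) y)
          ≤ a ^ n * (D * G).toReal := by
        intro n
        have e : μseq (n+1) = stepL P (μseq n) := by
          simp only [hμseqdef]; rw [Function.iterate_succ_apply']
        have e2 : stepL P (μseq n) y - stepL P (fun x => π x) y
            = stepL P (μseq n - fun x => π x) y := by
          rw [stepL_sub hP0 hP1 (hμns n) hπs, Pi.sub_apply]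
        have hsummand : Summable (fun x => (μseq n x - π x) * P x y) :=
          summable_mul_P hP0 hP1 ((hμns n).sub hπs) y
        have h1 : |stepL P (μseq n - fun x => π x) y| ≤ ∑' x, |π x - μseq n x| := by
          have hn : Summable (fun x => ‖(μseq n x - π x) * P x y‖) := by
            refine Summable.of_nonneg_of_le (fun x => norm_nonneg _) (fun x => ?_)
              (((hμns n).sub hπs).abs)
            rw [Real.norm_eq_abs, abs_mul, abs_of_nonneg (hP0 x y)]
            exact mul_le_of_le_one_right (abs_nonneg _) (P_le_one hP0 hP1 x y)
          have h := norm_tsum_le_tsum_norm hn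
          rw [Real.norm_eq_abs] at h
          have e3 : stepL P (μseq n - fun x => π x) y
              = ∑' x, (μseq n x - π x) * P x y := by
            rw [stepL]
            exact tsum_congr (fun x => by rw [Pi.sub_apply])
          rw [e3]
          refine h.trans ?_
          refine Summable.tsum_le_tsum (fun x => ?_) hn (hπs.sub (hμns n)).abs
          rw [Real.norm_eq_abs, abs_mul, abs_of_nonneg (hP0 x y), abs_sub_comm]
          exact mul_le_of_le_one_right (abs_nonneg _) (P_le_one hP0 hP1 x y)
        rw [e, Real.dist_eq, e2]
        exact h1.trans (hsumdiff n)
      have t2 : Filter.Tendsto (fun n => μseq (n+1) y) Filter.atTop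
          (nhds (stepL P (fun x => π x) y)) := by
        rw [tendsto_iff_dist_tendsto_zero]
        refine squeeze_zero (fun n => dist_nonneg) hb ?_
        have := (tendsto_pow_atTop_nhds_zero_of_lt_one ha0.le ha1).mul_const
          ((D * G).toReal)
        rwa [zero_mul] at this
      exact tendsto_nhds_unique t2 t1
    refine ⟨fun x => π x, ⟨hπ0, hπ1, hπUfin, hfix⟩, ?_⟩
    -- uniqueness
    rintro π' ⟨h'0, h'1, h'U, h'fix⟩
    have h'V : normU V π' < ⊤ :=
      lt_of_le_of_lt (cmp2 _) (ENNReal.mul_lt_top ENNReal.ofReal_lt_top h'U)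
    have hdV : normU V (π' - fun x => π x) < ⊤ :=
      lt_of_le_of_lt (normU_sub_le hV0 _ _) (ENNReal.add_lt_top.2 ⟨h'V, hπVfin⟩)
    have hcon : normU V (π' - fun x => π x)
        ≤ ENNReal.ofReal a * normU V (π' - fun x => π x) := by
      have h := hcontr h'0 h'1 hπ0 hπ1
      rwa [h'fix, hfix] at h
    have hz : normU V (π' - fun x => π x) = 0 := by
      by_contra hne
      have hlt : ENNReal.ofReal a * normU V (π' - fun x => π x)
          < 1 * normU V (π' - fun x => π x) :=
        (ENNReal.mul_lt_mul_iff_left hne hdV.ne).2 (ENNReal.ofReal_lt_one.2 ha1)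
      rw [one_mul] at hlt
      exact absurd hcon (not_le.2 hlt)
    funext x
    have h8 : ∀ z, ENNReal.ofReal (V z * |π' z - π z|) = 0 := by
      rw [hnorm_eq] at hz
      exact ENNReal.tsum_eq_zero.1 hz
    have h9 := ENNReal.ofReal_eq_zero.1 (h8 x)
    have h10 : |π' x - π x| = 0 := by
      refine le_antisymm ?_ (abs_nonneg _)
      calc |π' x - π x| ≤ V x * |π' x - π x| :=
            le_mul_of_one_le_left (abs_nonneg _) (hV1 x)
        _ ≤ 0 := h9
    have := abs_eq_zero.1 h10
    linarith
  · -- geometric contraction in the U norm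
    refine ⟨(1 + β) * β⁻¹, by positivity, a, ⟨ha0, ha1⟩, ?_⟩
    intro μ₁ μ₂ h10 h11 h1U h20 h21 h2U n
    calc normU U ((stepL P)^[n] μ₁ - (stepL P)^[n] μ₂)
        ≤ ENNReal.ofReal β⁻¹ * normU V ((stepL P)^[n] μ₁ - (stepL P)^[n] μ₂) := cmp1 _
      _ ≤ ENNReal.ofReal β⁻¹ * (ENNReal.ofReal a ^ n * normU V (μ₁ - μ₂)) :=
          mul_le_mul_right (hgeo μ₁ μ₂ h10 h11 h20 h21 n) _
      _ ≤ ENNReal.ofReal β⁻¹ * (ENNReal.ofReal a ^ n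
            * (ENNReal.ofReal (1 + β) * normU U (μ₁ - μ₂))) := by
          refine mul_le_mul_right (mul_le_mul_right (cmp2 _) _) _
      _ = ENNReal.ofReal ((1 + β) * β⁻¹ * a ^ n) * normU U (μ₁ - μ₂) := by
          rw [ENNReal.ofReal_mul (by positivity), ENNReal.ofReal_mul (by positivity),
            ENNReal.ofReal_pow ha0.le]
          ring
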